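/- If the general consequence relation ⊢_L is one-step sound (and Ax(𝔸) is sound and complete), then ⊢_L is sound with respect to the semantic consequence relation ⊩: for every finite Γ ∪ {φ} ⊆ ML, Γ ⊢_L φ implies Γ ⊩ φ. -/

import Mathlib

open CategoryTheory

/-- A commutative integral FL-algebra (residuated lattice): a bounded lattice with a
commutative monoid operation `*` whose unit `1` is the top element, together with a
residuated implication `himp` satisfying `a * b ≤ c ↔ b ≤ himp a c`. -/
class FLAlgebra (A : Type) extends Lattice A, BoundedOrder A, CommMonoid A where
  himp : A → A → A
  residuation : ∀ a b c : A, a * b ≤ c ↔ b ≤ himp a c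
  one_eq_top : (1 : A) = ⊤

/-- A (unary) predicate lifting for a `Set`-endofunctor `T` with truth values in `A`:
a natural transformation `Hom(-,A) ⇒ Hom(T(-),A)` where `Hom(-,A)` is the contravariant
hom-functor into `A`. -/
structure PredLifting (T : Type ⥤ Type) (A : Type) where
  app : ∀ S : Type, (S → A) → T.obj S → A
  naturality : ∀ {S S' : Type} (f : S → S') (X : S' → A),
    app S' X ∘ T.map (TypeCat.ofHom f) = app S (X ∘ f)

/-- The functor `T_P = EV_P × T`, where `EV_P` is the constant functor with value
`Hom(P,A)`. -/
def TP (P A : Type) (T : Type ⥤ Type) : Type ⥤ Type where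
  obj S := (P → A) × T.obj S
  map f := TypeCat.ofHom fun x => (x.1, T.map f x.2)
  map_id X := by ext x <;> simp
  map_comp f g := by ext x <;> simp

/-- Formulas of the many-valued coalgebraic modal language `ML`: constants `c̄` (`const`),
nullary modalities `◻_{λ^p}` (`prop`), binary connectives `∨, ∧, &, →`
(`or`, `and`, `conj`, `imp`), and unary modalities `◻_λ` (`box`), where `Λ` indexes
the predicate liftings. -/
inductive MLFormula (P A Λ : Type) : Type where
  | const : A → MLFormula P A Λ
  | prop : P → MLFormula P A Λ
  | or : MLFormula P A Λ → MLFormula P A Λ → MLFormula P A Λ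
  | and : MLFormula P A Λ → MLFormula P A Λ → MLFormula P A Λ
  | conj : MLFormula P A Λ → MLFormula P A Λ → MLFormula P A Λ
  | imp : MLFormula P A Λ → MLFormula P A Λ → MLFormula P A Λ
  | box : Λ → MLFormula P A Λ → MLFormula P A Λ

namespace MLFormula

/-- The modal rank of a formula: maximal nesting depth of unary modalities `◻_λ`.
`L_n` is the set of formulas of rank ≤ n. -/
def rank {P A Λ : Type} : MLFormula P A Λ → ℕ
  | const _ => 0
  | prop _ => 0
  | or φ ψ => max (rank φ) (rank ψ)
  | and φ ψ => max (rank φ) (rank ψ)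
  | conj φ ψ => max (rank φ) (rank ψ)
  | imp φ ψ => max (rank φ) (rank ψ)
  | box _ φ => rank φ + 1

/-- Application of a substitution `ρ : P → ML`, uniformly replacing each nullary
modality `◻_{λ^p}` by `ρ p`. -/
def subst {P A Λ : Type} (ρ : P → MLFormula P A Λ) : MLFormula P A Λ → MLFormula P A Λ
  | const c => const c
  | prop p => ρ p
  | or φ ψ => or (subst ρ φ) (subst ρ ψ)
  | and φ ψ => and (subst ρ φ) (subst ρ ψ)
  | conj φ ψ => conj (subst ρ φ) (subst ρ ψ)
  | imp φ ψ => imp (subst ρ φ) (subst ρ ψ)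
  | box l φ => box l (subst ρ φ)

end MLFormula

/-- A `T`-model: a `T_P`-coalgebra `⟨S, σ_V⟩` where `σ_V s = (V s, σ s)` for a valuation
`V : S → Hom(P,A)` and a `T`-coalgebra `σ : S → T S`. -/
structure TModel (T : Type ⥤ Type) (P A : Type) where
  S : Type
  V : S → P → A
  σ : S → T.obj S

variable {T : Type ⥤ Type} {P A Λ : Type}

/-- The semantics `‖φ‖_𝔠 : S → A` of a formula in a `T`-model, given an assignment
`lift` of predicate liftings to the modality indices in `Λ`. -/
def sem [FLAlgebra A] (lift : Λ → PredLifting T A) (M : TModel T P A) :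
    MLFormula P A Λ → M.S → A
  | .const c, _ => c
  | .prop p, s => M.V s p
  | .or φ ψ, s => sem lift M φ s ⊔ sem lift M ψ s
  | .and φ ψ, s => sem lift M φ s ⊓ sem lift M ψ s
  | .conj φ ψ, s => sem lift M φ s * sem lift M ψ s
  | .imp φ ψ, s => FLAlgebra.himp (sem lift M φ s) (sem lift M ψ s)
  | .box l φ, s => (lift l).app M.S (sem lift M φ) (M.σ s)

/-- The (pseudo-)terminal sequence: `T_P^0 1̃ = 1̃ = Hom(P,A) × 1` and
`T_P^{n+1} 1̃ = T_P (T_P^n 1̃)`. -/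
def TPn (P A : Type) (T : Type ⥤ Type) : ℕ → Type :=
  Nat.rec ((P → A) × PUnit) (fun _ ih => (P → A) × T.obj ih)

/-- `T_P^{n+1} 1̃` is (definitionally) `T_P` applied to `T_P^n 1̃`. -/
theorem TPn_succ (P A : Type) (T : Type ⥤ Type) (n : ℕ) :
    TPn P A T (n+1) = (TP P A T).obj (TPn P A T n) := rfl

/-- Every element of `T_P^n 1̃` has the form `⟨ν, δ⟩`; this extracts `ν : Hom(P,A)`. -/
def projV (P A : Type) (T : Type ⥤ Type) : (n : ℕ) → TPn P A T n → (P → A)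
  | 0 => fun t => t.1
  | _+1 => fun t => t.1

/-- The `n`-step semantics `‖φ‖_n : T_P^n 1̃ → A` (well-behaved for `rank φ ≤ n`;
the value of a box at level `0` is junk `1`). -/
def stepSem [FLAlgebra A] (lift : Λ → PredLifting T A) :
    MLFormula P A Λ → (n : ℕ) → TPn P A T n → A
  | .const c, _, _ => c
  | .prop p, n, t => projV P A T n t p
  | .or φ ψ, n, t => stepSem lift φ n t ⊔ stepSem lift ψ n t
  | .and φ ψ, n, t => stepSem lift φ n t ⊓ stepSem lift ψ n t
  | .conj φ ψ, n, t => stepSem lift φ n t * stepSem lift ψ n t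
  | .imp φ ψ, n, t => FLAlgebra.himp (stepSem lift φ n t) (stepSem lift ψ n t)
  | .box l φ, n, t =>
    (match (motive := (k : ℕ) → TPn P A T k → A) n with
      | 0 => fun _ => 1
      | m+1 => fun t => (lift l).app (TPn P A T m) (fun u => stepSem lift φ m u) t.2) t

/-- The maps `σ_k : S → T_P^k 1̃`: `σ_0 s = ⟨V s, •⟩` and `σ_{k+1} = T_P σ_k ∘ σ_V`. -/
def sigmaN (M : TModel T P A) : (k : ℕ) → M.S → TPn P A T k
  | 0 => fun s => (M.V s, PUnit.unit)
  | k+1 => fun s => (TP P A T).map (TypeCat.ofHom (sigmaN M k)) (M.V s, M.σ s)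

/-- The canonical map `!'_{T_P^m 1̃} : T_P^m 1̃ → 1̃`, `⟨ν, δ⟩ ↦ ⟨ν, •⟩`. -/
def bangTilde (P A : Type) (T : Type ⥤ Type) : (m : ℕ) → TPn P A T m → TPn P A T 0
  | 0 => fun t => (t.1, PUnit.unit)
  | _+1 => fun t => (t.1, PUnit.unit)

/-- `ι^n := T_P^n ι^0 : T_P^n 1̃ → T_P^{n+1} 1̃`, for a given `ι^0 : 1̃ → T_P 1̃`. -/
def iotaN (P A : Type) (T : Type ⥤ Type) (ι0 : TPn P A T 0 → TPn P A T 1) :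
    (n : ℕ) → TPn P A T n → TPn P A T (n+1)
  | 0 => ι0
  | n+1 => ⇑((TP P A T).map (TypeCat.ofHom (iotaN P A T ι0 n)))

/-- `ι^n_k : T_P^n 1̃ → T_P^k 1̃`: `ι^n_0 ⟨ν,δ⟩ = ⟨ν,•⟩` and
`ι^n_{k+1} = T_P ι^n_k ∘ ι^n`. -/
def iotaNK (P A : Type) (T : Type ⥤ Type) (ι0 : TPn P A T 0 → TPn P A T 1) (n : ℕ) :
    (k : ℕ) → TPn P A T n → TPn P A T k
  | 0 => bangTilde P A T n
  | k+1 => ⇑((TP P A T).map (TypeCat.ofHom (iotaNK P A T ι0 n k))) ∘ iotaN P A T ι0 n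

/-- `T_P^k (!'_{T_P^m 1̃}) : T_P^{m+k} 1̃ → T_P^k 1̃`: the `k`-fold application of the
functor `T_P` to the canonical map `!'_{T_P^m 1̃} : T_P^m 1̃ → 1̃`. -/
def liftedBang (P A : Type) (T : Type ⥤ Type) (m : ℕ) :
    (k : ℕ) → TPn P A T (m + k) → TPn P A T k
  | 0 => bangTilde P A T m
  | k+1 => ⇑((TP P A T).map (TypeCat.ofHom (liftedBang P A T m k)))

/-- The `T`-model `⟨T_P^n 1̃, ι^n⟩`. -/
def terminalModel (P A : Type) (T : Type ⥤ Type) (ι0 : TPn P A T 0 → TPn P A T 1)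
    (n : ℕ) : TModel T P A where
  S := TPn P A T n
  V t := (iotaN P A T ι0 n t).1
  σ t := (iotaN P A T ι0 n t).2

/-- Semantic consequence `Γ ⊩ φ` over all `T`-models. -/
def SemConseq [FLAlgebra A] (lift : Λ → PredLifting T A)
    (Γ : Set (MLFormula P A Λ)) (φ : MLFormula P A Λ) : Prop :=
  ∀ (M : TModel T P A) (s : M.S), (∀ γ ∈ Γ, sem lift M γ s = 1) → sem lift M φ s = 1

/-- Step-`n` semantic consequence `Γ ⊩_n φ` over the terminal sequence. -/
def StepConseq [FLAlgebra A] (lift : Λ → PredLifting T A) (n : ℕ)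
    (Γ : Set (MLFormula P A Λ)) (φ : MLFormula P A Λ) : Prop :=
  ∀ t : TPn P A T n, (∀ γ ∈ Γ, stepSem lift γ n t = 1) → stepSem lift φ n t = 1

/-- Image of a finite set of formulas under a map (with classical decidable equality). -/
noncomputable def fimg {α β : Type} (f : α → β) (s : Finset α) : Finset β :=
  @Finset.image _ _ (Classical.decEq β) f s

/-- The general consequence relation `L`: the least set of consecutions containing
`Ax(𝔸)`, all substitution instances of `Ax(Λ)`, and closed under the monotonicity
rule `Γ ⊢ φ ⟹ ◻_λΓ ⊢ ◻_λφ`. -/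
inductive GenL (AxA AxL : Finset (MLFormula P A Λ) → MLFormula P A Λ → Prop) :
    Finset (MLFormula P A Λ) → MLFormula P A Λ → Prop where
  | axA {Γ φ} : AxA Γ φ → GenL AxA AxL Γ φ
  | axL {Γ φ} (ρ : P → MLFormula P A Λ) : AxL Γ φ →
      GenL AxA AxL (fimg (MLFormula.subst ρ) Γ) (MLFormula.subst ρ φ)
  | mono {Γ φ} (l : Λ) : GenL AxA AxL Γ φ →
      GenL AxA AxL (fimg (MLFormula.box l) Γ) (MLFormula.box l φ)

/-- The step-`n` consequence relations `L_n`: `L_0` is `Ax(𝔸)`-derivability restricted to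
rank-0 consecutions; `L_{n+1}` is the least set of consecutions among `L_{n+1}`-formulas
containing `Ax(𝔸)`-derivations, `n`-substitution instances of `Ax(Λ)`, and closed under
`Γ ⊢_{L_n} φ ⟹ ◻_λΓ ⊢_{L_{n+1}} ◻_λφ`. -/
inductive StepL (AxA AxL : Finset (MLFormula P A Λ) → MLFormula P A Λ → Prop) :
    ℕ → Finset (MLFormula P A Λ) → MLFormula P A Λ → Prop where
  | axA {n Γ φ} : (∀ γ ∈ Γ, MLFormula.rank γ ≤ n) → MLFormula.rank φ ≤ n →
      AxA Γ φ → StepL AxA AxL n Γ φ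
  | axL {n Γ φ} (ρ : P → MLFormula P A Λ) : (∀ p, MLFormula.rank (ρ p) ≤ n) →
      AxL Γ φ →
      StepL AxA AxL (n+1) (fimg (MLFormula.subst ρ) Γ) (MLFormula.subst ρ φ)
  | mono {n Γ φ} (l : Λ) : StepL AxA AxL n Γ φ →
      StepL AxA AxL (n+1) (fimg (MLFormula.box l) Γ) (MLFormula.box l φ)

/-- The `α`-cut of an `A`-valued fuzzy subset `f : X → A`. -/
def alphaCut {A : Type} [FLAlgebra A] {X : Type} (f : X → A) (α : A) : Set X :=
  {x | α ≤ f x}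

/-- `F ⊑_α G` for families of `A`-valued fuzzy subsets of the same universe. -/
def famLe {A : Type} [FLAlgebra A] {X : Type} (F G : Set (X → A)) (α : A) : Prop :=
  (⋂ f ∈ F, alphaCut f α) ⊆ ⋃ g ∈ G, alphaCut g α

/-- A predicate lifting is `α`-preserving if it preserves `⊑_α` between families of
fuzzy subsets. -/
def preservesAt [FLAlgebra A] (lam : PredLifting T A) (α : A) : Prop :=
  ∀ (S : Type) (F G : Set (S → A)), famLe F G α →
    famLe ((fun f => lam.app S f) '' F) ((fun f => lam.app S f) '' G) α

/-- `⊢_{L_n}` is sound w.r.t. `⊩_n`: for finite `Γ ∪ {φ} ⊆ L_n`, `Γ ⊢_{L_n} φ`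
implies `Γ ⊩_n φ`. -/
def SoundAt [FLAlgebra A] (lift : Λ → PredLifting T A)
    (AxA AxL : Finset (MLFormula P A Λ) → MLFormula P A Λ → Prop) (n : ℕ) : Prop :=
  ∀ (Γ : Finset (MLFormula P A Λ)) (φ : MLFormula P A Λ),
    (∀ γ ∈ Γ, MLFormula.rank γ ≤ n) → MLFormula.rank φ ≤ n →
    StepL AxA AxL n Γ φ → StepConseq lift n ↑Γ φ

/-- `⊢_{L_n}` is complete w.r.t. `⊩_n`: for finite `Γ ∪ {φ} ⊆ L_n`, `Γ ⊩_n φ`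
implies `Γ ⊢_{L_n} φ`. -/
def CompleteAt [FLAlgebra A] (lift : Λ → PredLifting T A)
    (AxA AxL : Finset (MLFormula P A Λ) → MLFormula P A Λ → Prop) (n : ℕ) : Prop :=
  ∀ (Γ : Finset (MLFormula P A Λ)) (φ : MLFormula P A Λ),
    (∀ γ ∈ Γ, MLFormula.rank γ ≤ n) → MLFormula.rank φ ≤ n →
    StepConseq lift n ↑Γ φ → StepL AxA AxL n Γ φ

/-- `⊢_L` is one-step sound: for every `n > 0`, soundness of `⊢_{L_{n-1}}` w.r.t.
`⊩_{n-1}` implies soundness of `⊢_{L_n}` w.r.t. `⊩_n`. -/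
def OneStepSound [FLAlgebra A] (lift : Λ → PredLifting T A)
    (AxA AxL : Finset (MLFormula P A Λ) → MLFormula P A Λ → Prop) : Prop :=
  ∀ n : ℕ, SoundAt lift AxA AxL n → SoundAt lift AxA AxL (n+1)

/-- `⊢_L` is one-step complete: for every `n > 0`, completeness of `⊢_{L_{n-1}}` w.r.t.
`⊩_{n-1}` implies completeness of `⊢_{L_n}` w.r.t. `⊩_n`. -/
def OneStepComplete [FLAlgebra A] (lift : Λ → PredLifting T A)
    (AxA AxL : Finset (MLFormula P A Λ) → MLFormula P A Λ → Prop) : Prop :=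
  ∀ n : ℕ, CompleteAt lift AxA AxL n → CompleteAt lift AxA AxL (n+1)

section Aux

variable {T : Type ⥤ Type} {P A Λ : Type}

theorem mem_fimg {α β : Type} (f : α → β) (s : Finset α) (b : β) :
    b ∈ fimg f s ↔ ∃ a ∈ s, f a = b := by
  unfold fimg
  exact @Finset.mem_image _ _ (Classical.decEq β) f s b

theorem fimg_congr {α β : Type} {f g : α → β} {s : Finset α}
    (h : ∀ a ∈ s, f a = g a) : fimg f s = fimg g s := by
  unfold fimg
  exact @Finset.image_congr _ _ (Classical.decEq β) f g s (fun a ha => h a ha)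

/-- Max modal rank of substituted variables. -/
def psubRank (f : P → ℕ) : MLFormula P A Λ → ℕ
  | .const _ => 0
  | .prop p => f p
  | .or φ ψ => max (psubRank f φ) (psubRank f ψ)
  | .and φ ψ => max (psubRank f φ) (psubRank f ψ)
  | .conj φ ψ => max (psubRank f φ) (psubRank f ψ)
  | .imp φ ψ => max (psubRank f φ) (psubRank f ψ)
  | .box _ φ => psubRank f φ

theorem subst_trim (ρ : P → MLFormula P A Λ) (N : ℕ) :
    ∀ φ : MLFormula P A Λ, psubRank (fun p => (ρ p).rank) φ ≤ N →
      MLFormula.subst (fun p => if (ρ p).rank ≤ N then ρ p else .prop p) φ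
        = MLFormula.subst ρ φ := by
  intro φ
  induction φ with
  | const c => intro; rfl
  | prop p =>
      intro h
      simp only [psubRank] at h
      simp only [MLFormula.subst]
      rw [if_pos h]
  | or φ ψ ihφ ihψ =>
      intro h
      simp only [psubRank, max_le_iff] at h
      simp only [MLFormula.subst]
      rw [ihφ h.1, ihψ h.2]
  | and φ ψ ihφ ihψ =>
      intro h
      simp only [psubRank, max_le_iff] at h
      simp only [MLFormula.subst]
      rw [ihφ h.1, ihψ h.2]
  | conj φ ψ ihφ ihψ =>
      intro h
      simp only [psubRank, max_le_iff] at h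
      simp only [MLFormula.subst]
      rw [ihφ h.1, ihψ h.2]
  | imp φ ψ ihφ ihψ =>
      intro h
      simp only [psubRank, max_le_iff] at h
      simp only [MLFormula.subst]
      rw [ihφ h.1, ihψ h.2]
  | box l φ ih =>
      intro h
      simp only [MLFormula.subst, psubRank] at *
      rw [ih h]

theorem rank_subst_le (ρ : P → MLFormula P A Λ) (n : ℕ)
    (hρ : ∀ p, (ρ p).rank ≤ n) :
    ∀ φ : MLFormula P A Λ, (MLFormula.subst ρ φ).rank ≤ φ.rank + n := by
  intro φ
  induction φ with
  | const c => simp [MLFormula.subst, MLFormula.rank]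
  | prop p => simpa [MLFormula.subst, MLFormula.rank] using hρ p
  | or φ ψ ihφ ihψ =>
      simp only [MLFormula.subst, MLFormula.rank, max_le_iff]
      constructor
      · exact le_trans ihφ (Nat.add_le_add_right (le_max_left _ _) n)
      · exact le_trans ihψ (Nat.add_le_add_right (le_max_right _ _) n)
  | and φ ψ ihφ ihψ =>
      simp only [MLFormula.subst, MLFormula.rank, max_le_iff]
      constructor
      · exact le_trans ihφ (Nat.add_le_add_right (le_max_left _ _) n)
      · exact le_trans ihψ (Nat.add_le_add_right (le_max_right _ _) n)
  | conj φ ψ ihφ ihψ =>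
      simp only [MLFormula.subst, MLFormula.rank, max_le_iff]
      constructor
      · exact le_trans ihφ (Nat.add_le_add_right (le_max_left _ _) n)
      · exact le_trans ihψ (Nat.add_le_add_right (le_max_right _ _) n)
  | imp φ ψ ihφ ihψ =>
      simp only [MLFormula.subst, MLFormula.rank, max_le_iff]
      constructor
      · exact le_trans ihφ (Nat.add_le_add_right (le_max_left _ _) n)
      · exact le_trans ihψ (Nat.add_le_add_right (le_max_right _ _) n)
  | box l φ ih =>
      simp only [MLFormula.subst, MLFormula.rank]
      omega

/-- `StepL` derivations only involve formulas of rank ≤ n (given rank-1 axioms). -/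
theorem stepL_rank {AxA AxL : Finset (MLFormula P A Λ) → MLFormula P A Λ → Prop}
    (hAxL : ∀ Γ φ, AxL Γ φ →
      (∀ γ ∈ Γ, MLFormula.rank γ ≤ 1) ∧ MLFormula.rank φ ≤ 1)
    {n : ℕ} {Γ : Finset (MLFormula P A Λ)} {φ : MLFormula P A Λ}
    (h : StepL AxA AxL n Γ φ) :
    (∀ γ ∈ Γ, MLFormula.rank γ ≤ n) ∧ MLFormula.rank φ ≤ n := by
  induction h with
  | axA hΓ hφ _ => exact ⟨hΓ, hφ⟩
  | @axL n Γ φ ρ hρ hax =>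
      obtain ⟨hΓ1, hφ1⟩ := hAxL _ _ hax
      constructor
      · intro γ' hγ'
        obtain ⟨γ, hγ, rfl⟩ := (mem_fimg _ _ _).1 hγ'
        calc (MLFormula.subst ρ γ).rank ≤ γ.rank + n := rank_subst_le ρ n hρ γ
          _ ≤ 1 + n := Nat.add_le_add_right (hΓ1 γ hγ) n
          _ = n + 1 := Nat.add_comm 1 n
      · calc (MLFormula.subst ρ φ).rank ≤ φ.rank + n := rank_subst_le ρ n hρ φ
          _ ≤ 1 + n := Nat.add_le_add_right hφ1 n
          _ = n + 1 := Nat.add_comm 1 n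
  | @mono n Γ φ l _ ih =>
      constructor
      · intro γ' hγ'
        obtain ⟨γ, hγ, rfl⟩ := (mem_fimg _ _ _).1 hγ'
        simpa [MLFormula.rank] using ih.1 γ hγ
      · simpa [MLFormula.rank] using ih.2

/-- `StepL` is monotone in `n`. -/
theorem stepL_mono {AxA AxL : Finset (MLFormula P A Λ) → MLFormula P A Λ → Prop}
    {n : ℕ} {Γ : Finset (MLFormula P A Λ)} {φ : MLFormula P A Λ}
    (h : StepL AxA AxL n Γ φ) : ∀ m, n ≤ m → StepL AxA AxL m Γ φ := by
  induction h with
  | axA hΓ hφ hax =>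
      intro m hm
      exact .axA (fun γ hγ => le_trans (hΓ γ hγ) hm) (le_trans hφ hm) hax
  | @axL n Γ φ ρ hρ hax =>
      intro m hm
      obtain ⟨m', rfl⟩ : ∃ m', m = m' + 1 := by
        cases m with
        | zero => omega
        | succ m' => exact ⟨m', rfl⟩
      exact .axL ρ (fun p => le_trans (hρ p) (by omega)) hax
  | @mono n Γ φ l _ ih =>
      intro m hm
      obtain ⟨m', rfl⟩ : ∃ m', m = m' + 1 := by
        cases m with
        | zero => omega
        | succ m' => exact ⟨m', rfl⟩
      exact .mono l (ih m' (by omega))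

/-- Every `GenL` derivation is a `StepL` derivation at some level. -/
theorem genL_to_stepL {AxA AxL : Finset (MLFormula P A Λ) → MLFormula P A Λ → Prop}
    {Γ : Finset (MLFormula P A Λ)} {φ : MLFormula P A Λ}
    (h : GenL AxA AxL Γ φ) : ∃ n, StepL AxA AxL n Γ φ := by
  induction h with
  | @axA Γ φ hax =>
      refine ⟨Γ.sup MLFormula.rank ⊔ φ.rank, .axA ?_ le_sup_right hax⟩
      intro γ hγ
      exact le_trans (Finset.le_sup hγ) le_sup_left
  | @axL Γ φ ρ hax =>
      set N : ℕ := Γ.sup (psubRank (fun p => (ρ p).rank)) ⊔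
        psubRank (fun p => (ρ p).rank) φ with hN
      set ρ' : P → MLFormula P A Λ :=
        fun p => if (ρ p).rank ≤ N then ρ p else .prop p with hρ'
      have hρ'rank : ∀ p, (ρ' p).rank ≤ N := by
        intro p
        show (if (ρ p).rank ≤ N then ρ p else MLFormula.prop p).rank ≤ N
        split
        · assumption
        · exact Nat.zero_le N
      have hφeq : MLFormula.subst ρ' φ = MLFormula.subst ρ φ :=
        subst_trim ρ N φ le_sup_right
      have hΓeq : fimg (MLFormula.subst ρ') Γ = fimg (MLFormula.subst ρ) Γ :=
        fimg_congr (fun γ hγ =>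
          subst_trim ρ N γ (le_trans (Finset.le_sup hγ) le_sup_left))
      refine ⟨N + 1, ?_⟩
      rw [← hφeq, ← hΓeq]
      exact .axL ρ' hρ'rank hax
  | @mono Γ φ l _ ih =>
      obtain ⟨n, hn⟩ := ih
      exact ⟨n + 1, .mono l hn⟩

theorem projV_sigmaN (M : TModel T P A) (n : ℕ) (s : M.S) :
    projV P A T n (sigmaN M n s) = M.V s := by
  cases n <;> rfl

/-- The step semantics along `σ_n` agrees with the model semantics for rank ≤ n. -/
theorem sem_eq_stepSem [FLAlgebra A] (lift : Λ → PredLifting T A) (M : TModel T P A) :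
    ∀ (φ : MLFormula P A Λ) (n : ℕ), φ.rank ≤ n →
      ∀ s : M.S, sem lift M φ s = stepSem lift φ n (sigmaN M n s) := by
  intro φ
  induction φ with
  | const c => intro n _ s; rfl
  | prop p =>
      intro n _ s
      show M.V s p = projV P A T n (sigmaN M n s) p
      rw [projV_sigmaN]
  | or φ ψ ihφ ihψ =>
      intro n h s
      simp only [MLFormula.rank, max_le_iff] at h
      show sem lift M φ s ⊔ sem lift M ψ s = _
      rw [ihφ n h.1 s, ihψ n h.2 s]; rfl
  | and φ ψ ihφ ihψ =>
      intro n h s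
      simp only [MLFormula.rank, max_le_iff] at h
      show sem lift M φ s ⊓ sem lift M ψ s = _
      rw [ihφ n h.1 s, ihψ n h.2 s]; rfl
  | conj φ ψ ihφ ihψ =>
      intro n h s
      simp only [MLFormula.rank, max_le_iff] at h
      show sem lift M φ s * sem lift M ψ s = _
      rw [ihφ n h.1 s, ihψ n h.2 s]; rfl
  | imp φ ψ ihφ ihψ =>
      intro n h s
      simp only [MLFormula.rank, max_le_iff] at h
      show FLAlgebra.himp (sem lift M φ s) (sem lift M ψ s) = _
      rw [ihφ n h.1 s, ihψ n h.2 s]; rfl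
  | box l φ ih =>
      intro n h s
      simp only [MLFormula.rank] at h
      obtain ⟨m, rfl⟩ : ∃ m, n = m + 1 := by
        cases n with
        | zero => omega
        | succ m => exact ⟨m, rfl⟩
      have hφ : φ.rank ≤ m := by omega
      show (lift l).app M.S (sem lift M φ) (M.σ s) =
        (lift l).app (TPn P A T m) (fun u => stepSem lift φ m u)
          (T.map (TypeCat.ofHom (sigmaN M m)) (M.σ s))
      have hnat := congrFun ((lift l).naturality (sigmaN M m)
        (fun u => stepSem lift φ m u)) (M.σ s)
      simp only [Function.comp] at hnat
      rw [hnat]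
      congr 1
      funext s'
      exact ih m hφ s'

/-- `SoundAt` holds at every level. -/
theorem soundAt_all [FLAlgebra A] (lift : Λ → PredLifting T A)
    (AxA AxL : Finset (MLFormula P A Λ) → MLFormula P A Λ → Prop)
    (h0 : SoundAt lift AxA AxL 0) (hone : OneStepSound lift AxA AxL) :
    ∀ n, SoundAt lift AxA AxL n := by
  intro n
  induction n with
  | zero => exact h0
  | succ m ih => exact hone m ih

end Aux

/-- If the general consequence relation `⊢_L` is one-step sound (and
`Ax(𝔸)` is sound and complete), then `⊢_L` is sound w.r.t. the semantic consequence
relation `⊩`: for every finite `Γ ∪ {φ} ⊆ ML`, `Γ ⊢_L φ` implies `Γ ⊩ φ`. -/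
theorem genL_sound
    {T : Type ⥤ Type} {P A Λ : Type} [FLAlgebra A]
    (lift : Λ → PredLifting T A)
    (hT : ∃ S : Type, Nonempty (T.obj S))
    (AxA AxL : Finset (MLFormula P A Λ) → MLFormula P A Λ → Prop)
    (hAxL : ∀ Γ φ, AxL Γ φ →
      (∀ γ ∈ Γ, MLFormula.rank γ ≤ 1) ∧ MLFormula.rank φ ≤ 1)
    (h0sound : SoundAt lift AxA AxL 0)
    (h0complete : CompleteAt lift AxA AxL 0)
    (hone : OneStepSound lift AxA AxL) :
    ∀ (Γ : Finset (MLFormula P A Λ)) (φ : MLFormula P A Λ),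
      GenL AxA AxL Γ φ → SemConseq lift ↑Γ φ := by
  intro Γ φ hL M s hΓ
  obtain ⟨n, hstep⟩ := genL_to_stepL hL
  have hranks := stepL_rank hAxL hstep
  have hsound := soundAt_all lift AxA AxL h0sound hone n
  have hsc : StepConseq lift n ↑Γ φ := hsound Γ φ hranks.1 hranks.2 hstep
  have hφsem := sem_eq_stepSem lift M φ n hranks.2 s
  rw [hφsem]
  apply hsc (sigmaN M n s)
  intro γ hγ
  rw [← sem_eq_stepSem lift M γ n (hranks.1 γ hγ) s]
  exact hΓ γ hγ
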